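/- The layered series S_L = Σ_m C[m] t^m v^{V_m − 2} e^{E_m − 1} f^{F_m}, reduced modulo f^{d+1}, satisfies the layered geometric equation modulo f^{d+1}: 1 − S_L' + Σ_{k=2}^q v^{k−1} e^k f t_k (S_L')^k ≡ 0 (mod f^{d+1}), where S_L' = S_L mod f^{d+1}. -/

import Mathlib

/-- The index type of the variables `t_2, …, t_q`. -/
abbrev TIdx (q : ℕ) := {k : ℕ // k ∈ Finset.Icc 2 q}

/-- Variables of the layered ring: `t_2, …, t_q` together with `v, e, f`
(encoded as `Sum.inr 0`, `Sum.inr 1`, `Sum.inr 2`). -/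
abbrev LIdx (q : ℕ) := TIdx q ⊕ Fin 3

/-- The hyper-Catalan number `C[m] = (Σ k·m_k)! / ((1 + Σ(k−1)m_k)! · Π m_k!)`. -/
noncomputable def hyperCatalan (q : ℕ) (m : TIdx q →₀ ℕ) : ℚ :=
  (Nat.factorial (m.sum fun k mk => (k : ℕ) * mk) : ℚ) /
    ((Nat.factorial (1 + m.sum fun k mk => ((k : ℕ) - 1) * mk) : ℚ) *
      ∏ k ∈ m.support, (Nat.factorial (m k) : ℚ))

/-- The hyper-Catalan generating series `S = Σ_m C[m] t^m`. -/
noncomputable def hyperCatalanSeries (q : ℕ) : MvPowerSeries (TIdx q) ℚ :=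
  fun m => hyperCatalan q m

/-- The `t`-part of a layered exponent vector. -/
noncomputable def tPart (q : ℕ) (n : LIdx q →₀ ℕ) : TIdx q →₀ ℕ :=
  Finsupp.comapDomain Sum.inl n Sum.inl_injective.injOn

/-- The layered series `S_L = Σ_m C[m] t^m v^{V_m−2} e^{E_m−1} f^{F_m}`: the
coefficient of a layered monomial is `C[m]` for its `t`-part `m`, provided the
`v`, `e`, `f` exponents are `V_m − 2 = Σ(k−1)m_k`, `E_m − 1 = Σ k·m_k`, `F_m = Σ m_k`. -/
noncomputable def layeredSeries (q : ℕ) : MvPowerSeries (LIdx q) ℚ :=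
  fun n =>
    if n (Sum.inr 0) = (tPart q n).sum (fun k mk => ((k : ℕ) - 1) * mk) ∧
        n (Sum.inr 1) = (tPart q n).sum (fun k mk => (k : ℕ) * mk) ∧
        n (Sum.inr 2) = (tPart q n).sum (fun _ mk => mk) then
      hyperCatalan q (tPart q n)
    else 0

/-- Reduction modulo `f^{d+1}`: discard all monomials with `f`-degree `> d`. -/
noncomputable def truncF (q d : ℕ) (φ : MvPowerSeries (LIdx q) ℚ) :
    MvPowerSeries (LIdx q) ℚ :=
  fun n => if n (Sum.inr 2) ≤ d then MvPowerSeries.coeff n φ else 0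


namespace Aux18

open MvPowerSeries Finsupp

variable {q : ℕ}

noncomputable def Lmap (q : ℕ) (m : TIdx q →₀ ℕ) : LIdx q →₀ ℕ :=
  m.mapDomain Sum.inl
    + Finsupp.single (Sum.inr 0) (m.sum fun k mk => ((k : ℕ) - 1) * mk)
    + Finsupp.single (Sum.inr 1) (m.sum fun k mk => (k : ℕ) * mk)
    + Finsupp.single (Sum.inr 2) (m.sum fun _ mk => mk)

lemma Lmap_apply_inl (m : TIdx q →₀ ℕ) (k : TIdx q) :
    Lmap q m (Sum.inl k) = m k := by
  simp [Lmap, Finsupp.mapDomain_apply Sum.inl_injective, Finsupp.single_apply]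

lemma Lmap_apply_inr0 (m : TIdx q →₀ ℕ) :
    Lmap q m (Sum.inr 0) = m.sum fun k mk => ((k : ℕ) - 1) * mk := by
  simp [Lmap, Finsupp.mapDomain_notin_range, Finsupp.single_apply]

lemma Lmap_apply_inr1 (m : TIdx q →₀ ℕ) :
    Lmap q m (Sum.inr 1) = m.sum fun k mk => (k : ℕ) * mk := by
  simp [Lmap, Finsupp.mapDomain_notin_range, Finsupp.single_apply]

lemma Lmap_apply_inr2 (m : TIdx q →₀ ℕ) :
    Lmap q m (Sum.inr 2) = m.sum fun _ mk => mk := by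
  simp [Lmap, Finsupp.mapDomain_notin_range, Finsupp.single_apply]

lemma tPart_apply (n : LIdx q →₀ ℕ) (k : TIdx q) : tPart q n k = n (Sum.inl k) := rfl

lemma tPart_Lmap (m : TIdx q →₀ ℕ) : tPart q (Lmap q m) = m := by
  ext k; rw [tPart_apply, Lmap_apply_inl]

lemma Lmap_injective : Function.Injective (Lmap q) :=
  Function.LeftInverse.injective tPart_Lmap

lemma tPart_add (a b : LIdx q →₀ ℕ) : tPart q (a + b) = tPart q a + tPart q b := by
  ext k; simp [tPart_apply]

lemma Lmap_add (a b : TIdx q →₀ ℕ) : Lmap q (a + b) = Lmap q a + Lmap q b := by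
  unfold Lmap
  rw [Finsupp.mapDomain_add,
    Finsupp.sum_add_index' (fun k => mul_zero _) (fun k b₁ b₂ => mul_add _ _ _),
    Finsupp.sum_add_index' (fun k => mul_zero _) (fun k b₁ b₂ => mul_add _ _ _),
    Finsupp.sum_add_index' (fun (k : TIdx q) => rfl) (fun k b₁ b₂ => rfl),
    Finsupp.single_add, Finsupp.single_add, Finsupp.single_add]
  abel

lemma Lmap_zero : Lmap q 0 = 0 := by
  simp [Lmap]

lemma tPart_zero : tPart q 0 = 0 := by
  ext k; simp [tPart_apply]

/-- `n` is "layered" iff it is in the image of `Lmap`. -/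
def Layered (n : LIdx q →₀ ℕ) : Prop := n = Lmap q (tPart q n)

lemma layered_iff (n : LIdx q →₀ ℕ) :
    (n (Sum.inr 0) = (tPart q n).sum (fun k mk => ((k : ℕ) - 1) * mk) ∧
        n (Sum.inr 1) = (tPart q n).sum (fun k mk => (k : ℕ) * mk) ∧
        n (Sum.inr 2) = (tPart q n).sum (fun _ mk => mk)) ↔
      n = Lmap q (tPart q n) := by
  constructor
  · rintro ⟨h0, h1, h2⟩
    ext x
    cases x with
    | inl k => rw [Lmap_apply_inl, tPart_apply]
    | inr i =>
      fin_cases i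
      · show n (Sum.inr 0) = Lmap q (tPart q n) (Sum.inr 0)
        rw [Lmap_apply_inr0]; exact h0
      · show n (Sum.inr 1) = Lmap q (tPart q n) (Sum.inr 1)
        rw [Lmap_apply_inr1]; exact h1
      · show n (Sum.inr 2) = Lmap q (tPart q n) (Sum.inr 2)
        rw [Lmap_apply_inr2]; exact h2
  · intro h
    refine ⟨?_, ?_, ?_⟩
    · conv_lhs => rw [h]
      rw [Lmap_apply_inr0]
    · conv_lhs => rw [h]
      rw [Lmap_apply_inr1]
    · conv_lhs => rw [h]
      rw [Lmap_apply_inr2]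

/-- The monomial substitution `t_k ↦ t_k v^{k-1} e^k f`, coefficient-wise. -/
noncomputable def phi (q : ℕ) (φ : MvPowerSeries (TIdx q) ℚ) : MvPowerSeries (LIdx q) ℚ :=
  fun n => if n = Lmap q (tPart q n) then φ (tPart q n) else 0

lemma coeff_phi (φ : MvPowerSeries (TIdx q) ℚ) (n : LIdx q →₀ ℕ) :
    MvPowerSeries.coeff n (phi q φ) =
      if n = Lmap q (tPart q n) then MvPowerSeries.coeff (tPart q n) φ else 0 := rfl

lemma phi_zero : phi q 0 = 0 := by
  funext n
  show (if n = Lmap q (tPart q n) then (0 : MvPowerSeries (TIdx q) ℚ) (tPart q n) else 0)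
      = (0 : MvPowerSeries (LIdx q) ℚ) n
  split <;> rfl

lemma phi_one : phi q 1 = 1 := by
  funext n
  show (if n = Lmap q (tPart q n) then MvPowerSeries.coeff (tPart q n) (1 : MvPowerSeries (TIdx q) ℚ) else 0)
      = MvPowerSeries.coeff n (1 : MvPowerSeries (LIdx q) ℚ)
  rw [MvPowerSeries.coeff_one, MvPowerSeries.coeff_one]
  split
  · rename_i h
    have : tPart q n = 0 ↔ n = 0 := by
      constructor
      · intro h0; rw [h, h0, Lmap_zero]
      · intro h0; rw [h0, tPart_zero]
    simp [this]
  · rename_i h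
    have : n ≠ 0 := by
      intro h0; apply h; rw [h0, tPart_zero, Lmap_zero]
    simp [this]

lemma phi_sub (φ ψ : MvPowerSeries (TIdx q) ℚ) : phi q (φ - ψ) = phi q φ - phi q ψ := by
  funext n
  have : MvPowerSeries.coeff n (phi q (φ - ψ))
      = MvPowerSeries.coeff n (phi q φ - phi q ψ) := by
    rw [map_sub, coeff_phi, coeff_phi, coeff_phi]
    split
    · rw [map_sub]
    · simp
  exact this

lemma phi_mul (φ ψ : MvPowerSeries (TIdx q) ℚ) : phi q (φ * ψ) = phi q φ * phi q ψ := by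
  funext n
  have key : MvPowerSeries.coeff n (phi q φ * phi q ψ) =
      ∑ p ∈ Finset.HasAntidiagonal.antidiagonal n,
        (if p.1 = Lmap q (tPart q p.1) then MvPowerSeries.coeff (tPart q p.1) φ else 0) *
        (if p.2 = Lmap q (tPart q p.2) then MvPowerSeries.coeff (tPart q p.2) ψ else 0) := by
    rw [MvPowerSeries.coeff_mul]
    refine Finset.sum_congr rfl fun p _ => ?_
    rw [coeff_phi, coeff_phi]
  show (if n = Lmap q (tPart q n) then MvPowerSeries.coeff (tPart q n) (φ * ψ) else 0)
      = MvPowerSeries.coeff n (phi q φ * phi q ψ)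
  rw [key]
  by_cases h : n = Lmap q (tPart q n)
  · rw [if_pos h, MvPowerSeries.coeff_mul]
    have hinj : Function.Injective
        (fun p : (TIdx q →₀ ℕ) × (TIdx q →₀ ℕ) => (Lmap q p.1, Lmap q p.2)) := by
      intro a b hab
      simp only [Prod.mk.injEq] at hab
      exact Prod.ext (Lmap_injective hab.1) (Lmap_injective hab.2)
    have hsub : (Finset.HasAntidiagonal.antidiagonal (tPart q n)).map ⟨_, hinj⟩ ⊆ Finset.HasAntidiagonal.antidiagonal n := by
      intro p hp
      rw [Finset.mem_map] at hp
      obtain ⟨a, ha, rfl⟩ := hp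
      rw [Finset.HasAntidiagonal.mem_antidiagonal] at ha
      simp only [Function.Embedding.coeFn_mk, Finset.HasAntidiagonal.mem_antidiagonal]
      show Lmap q a.1 + Lmap q a.2 = n
      rw [← Lmap_add, ha, ← h]
    rw [← Finset.sum_subset hsub ?_]
    · rw [Finset.sum_map]
      refine Finset.sum_congr rfl fun p _ => ?_
      simp [tPart_Lmap]
    · intro p hp hnp
      rw [Finset.HasAntidiagonal.mem_antidiagonal] at hp
      by_cases h1 : p.1 = Lmap q (tPart q p.1)
      · by_cases h2 : p.2 = Lmap q (tPart q p.2)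
        · exfalso
          apply hnp
          rw [Finset.mem_map]
          refine ⟨(tPart q p.1, tPart q p.2), ?_, ?_⟩
          · rw [Finset.HasAntidiagonal.mem_antidiagonal, ← tPart_add, hp]
          · show (Lmap q (tPart q p.1), Lmap q (tPart q p.2)) = p
            rw [← h1, ← h2]
        · rw [if_neg h2, mul_zero]
      · rw [if_neg h1, zero_mul]
  · rw [if_neg h]
    symm
    refine Finset.sum_eq_zero fun p hp => ?_
    rw [Finset.HasAntidiagonal.mem_antidiagonal] at hp
    by_cases h1 : p.1 = Lmap q (tPart q p.1)
    · by_cases h2 : p.2 = Lmap q (tPart q p.2)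
      · exfalso
        apply h
        have : tPart q n = tPart q p.1 + tPart q p.2 := by rw [← tPart_add, hp]
        rw [this, Lmap_add, ← h1, ← h2, hp]
      · rw [if_neg h2, mul_zero]
    · rw [if_neg h1, zero_mul]

lemma phi_pow (φ : MvPowerSeries (TIdx q) ℚ) (k : ℕ) : phi q (φ ^ k) = phi q φ ^ k := by
  induction k with
  | zero => simpa using phi_one
  | succ k ih => rw [pow_succ, pow_succ, phi_mul, ih]

lemma phi_sum {ι : Type*} (s : Finset ι) (F : ι → MvPowerSeries (TIdx q) ℚ) :
    phi q (∑ i ∈ s, F i) = ∑ i ∈ s, phi q (F i) := by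
  funext n
  have : MvPowerSeries.coeff n (phi q (∑ i ∈ s, F i))
      = MvPowerSeries.coeff n (∑ i ∈ s, phi q (F i)) := by
    rw [map_sum, coeff_phi]
    simp only [coeff_phi]
    split
    · rw [map_sum]
    · exact (Finset.sum_const_zero).symm
  exact this

lemma phi_X (k : TIdx q) :
    phi q (MvPowerSeries.X k) =
      (MvPowerSeries.X (Sum.inl k) : MvPowerSeries (LIdx q) ℚ) *
        MvPowerSeries.X (Sum.inr 0) ^ ((k : ℕ) - 1) *
        MvPowerSeries.X (Sum.inr 1) ^ (k : ℕ) *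
        MvPowerSeries.X (Sum.inr 2) := by
  have hE : Lmap q (Finsupp.single k 1) =
      Finsupp.single (Sum.inl k) 1 + Finsupp.single (Sum.inr 0) ((k : ℕ) - 1)
        + Finsupp.single (Sum.inr 1) (k : ℕ) + Finsupp.single (Sum.inr 2) 1 := by
    unfold Lmap
    rw [Finsupp.mapDomain_single]
    norm_num [Finsupp.sum_single_index]
  have hR : (MvPowerSeries.X (Sum.inl k) : MvPowerSeries (LIdx q) ℚ) *
        MvPowerSeries.X (Sum.inr 0) ^ ((k : ℕ) - 1) *
        MvPowerSeries.X (Sum.inr 1) ^ (k : ℕ) *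
        MvPowerSeries.X (Sum.inr 2) =
      MvPowerSeries.monomial (Lmap q (Finsupp.single k 1)) 1 := by
    rw [hE, MvPowerSeries.X_pow_eq, MvPowerSeries.X_pow_eq, MvPowerSeries.X,
      MvPowerSeries.X, MvPowerSeries.monomial_mul_monomial,
      MvPowerSeries.monomial_mul_monomial, MvPowerSeries.monomial_mul_monomial]
    norm_num
  rw [hR]
  funext n
  show (if n = Lmap q (tPart q n) then
      MvPowerSeries.coeff (tPart q n) (MvPowerSeries.X k) else 0)
     = MvPowerSeries.coeff n (MvPowerSeries.monomial (Lmap q (Finsupp.single k 1)) 1)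
  rw [MvPowerSeries.coeff_X, MvPowerSeries.coeff_monomial]
  by_cases h : n = Lmap q (tPart q n)
  · rw [if_pos h]
    by_cases h1 : tPart q n = Finsupp.single k 1
    · rw [if_pos h1, if_pos (by rw [h, h1])]
    · rw [if_neg h1, if_neg (fun hc => h1 (by rw [hc, tPart_Lmap]))]
  · rw [if_neg h, if_neg (fun hc => h (by rw [hc, tPart_Lmap]))]

end Aux18


namespace Aux18

open MvPowerSeries Finsupp

lemma phi_add {q : ℕ} (φ ψ : MvPowerSeries (TIdx q) ℚ) :
    phi q (φ + ψ) = phi q φ + phi q ψ := by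
  funext n
  have : MvPowerSeries.coeff n (phi q (φ + ψ))
      = MvPowerSeries.coeff n (phi q φ + phi q ψ) := by
    rw [map_add, coeff_phi, coeff_phi, coeff_phi]
    split
    · rw [map_add]
    · simp
  exact this

lemma layeredSeries_eq (q : ℕ) : layeredSeries q = phi q (hyperCatalanSeries q) := by
  funext n
  simp only [layeredSeries, phi, hyperCatalanSeries]
  exact if_congr (layered_iff n) rfl rfl

lemma coeff_mul_congr {q d : ℕ} {φ ψ χ ω : MvPowerSeries (LIdx q) ℚ}
    (h1 : ∀ m : LIdx q →₀ ℕ, m (Sum.inr 2) ≤ d →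
      MvPowerSeries.coeff m φ = MvPowerSeries.coeff m χ)
    (h2 : ∀ m : LIdx q →₀ ℕ, m (Sum.inr 2) ≤ d →
      MvPowerSeries.coeff m ψ = MvPowerSeries.coeff m ω)
    (n : LIdx q →₀ ℕ) (hn : n (Sum.inr 2) ≤ d) :
    MvPowerSeries.coeff n (φ * ψ) = MvPowerSeries.coeff n (χ * ω) := by
  rw [MvPowerSeries.coeff_mul, MvPowerSeries.coeff_mul]
  refine Finset.sum_congr rfl fun p hp => ?_
  rw [Finset.HasAntidiagonal.mem_antidiagonal] at hp
  have e : p.1 (Sum.inr 2) + p.2 (Sum.inr 2) = n (Sum.inr 2) := by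
    rw [← hp]; rfl
  rw [h1 p.1 (le_trans (Nat.le.intro e) hn),
    h2 p.2 (le_trans (Nat.le.intro (by rw [add_comm] at e; exact e)) hn)]

end Aux18

theorem stmt_18' (q d : ℕ)
    (hS : 1 - hyperCatalanSeries q + ∑ k : TIdx q,
        MvPowerSeries.X k * hyperCatalanSeries q ^ (k : ℕ) = 0) :
    ∀ n : LIdx q →₀ ℕ, n (Sum.inr 2) ≤ d →
      MvPowerSeries.coeff n
        (1 - truncF q d (layeredSeries q) + ∑ k : TIdx q,
          (MvPowerSeries.X (Sum.inl k) : MvPowerSeries (LIdx q) ℚ) *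
            MvPowerSeries.X (Sum.inr 0) ^ ((k : ℕ) - 1) *
            MvPowerSeries.X (Sum.inr 1) ^ (k : ℕ) *
            MvPowerSeries.X (Sum.inr 2) *
            truncF q d (layeredSeries q) ^ (k : ℕ)) = 0 := by
  intro n hn
  have hT : ∀ m : LIdx q →₀ ℕ, m (Sum.inr 2) ≤ d →
      MvPowerSeries.coeff m (truncF q d (layeredSeries q))
        = MvPowerSeries.coeff m (layeredSeries q) := by
    intro m hm
    show (if m (Sum.inr 2) ≤ d then MvPowerSeries.coeff m (layeredSeries q) else 0)
        = MvPowerSeries.coeff m (layeredSeries q)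
    rw [if_pos hm]
  have hpow : ∀ (k : ℕ) (m : LIdx q →₀ ℕ), m (Sum.inr 2) ≤ d →
      MvPowerSeries.coeff m (truncF q d (layeredSeries q) ^ k)
        = MvPowerSeries.coeff m (layeredSeries q ^ k) := by
    intro k
    induction k with
    | zero => intro m _; rw [pow_zero, pow_zero]
    | succ k ih =>
      intro m hm
      rw [pow_succ, pow_succ]
      exact Aux18.coeff_mul_congr ih hT m hm
  have hzero : (1 : MvPowerSeries (LIdx q) ℚ) - layeredSeries q + ∑ k : TIdx q,
      (MvPowerSeries.X (Sum.inl k) : MvPowerSeries (LIdx q) ℚ) *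
        MvPowerSeries.X (Sum.inr 0) ^ ((k : ℕ) - 1) *
        MvPowerSeries.X (Sum.inr 1) ^ (k : ℕ) *
        MvPowerSeries.X (Sum.inr 2) *
        layeredSeries q ^ (k : ℕ) = 0 := by
    rw [Aux18.layeredSeries_eq]
    have h0 : Aux18.phi q (1 - hyperCatalanSeries q + ∑ k : TIdx q,
        MvPowerSeries.X k * hyperCatalanSeries q ^ (k : ℕ)) = 0 := by
      rw [hS, Aux18.phi_zero]
    rw [Aux18.phi_add, Aux18.phi_sub, Aux18.phi_one, Aux18.phi_sum] at h0
    rw [← h0]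
    congr 1
    refine Finset.sum_congr rfl fun k _ => ?_
    rw [Aux18.phi_mul, Aux18.phi_X, Aux18.phi_pow]
  have e1 : MvPowerSeries.coeff n
      (1 - truncF q d (layeredSeries q) + ∑ k : TIdx q,
        (MvPowerSeries.X (Sum.inl k) : MvPowerSeries (LIdx q) ℚ) *
          MvPowerSeries.X (Sum.inr 0) ^ ((k : ℕ) - 1) *
          MvPowerSeries.X (Sum.inr 1) ^ (k : ℕ) *
          MvPowerSeries.X (Sum.inr 2) *
          truncF q d (layeredSeries q) ^ (k : ℕ))
      = MvPowerSeries.coeff n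
      (1 - layeredSeries q + ∑ k : TIdx q,
        (MvPowerSeries.X (Sum.inl k) : MvPowerSeries (LIdx q) ℚ) *
          MvPowerSeries.X (Sum.inr 0) ^ ((k : ℕ) - 1) *
          MvPowerSeries.X (Sum.inr 1) ^ (k : ℕ) *
          MvPowerSeries.X (Sum.inr 2) *
          layeredSeries q ^ (k : ℕ)) := by
    rw [map_add, map_add, map_sub, map_sub, hT n hn]
    congr 1
    rw [map_sum, map_sum]
    exact Finset.sum_congr rfl fun k _ =>
      Aux18.coeff_mul_congr (fun m _ => rfl) (hpow (k : ℕ)) n hn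
  rw [e1, hzero, map_zero]

/-- The layered series reduced mod `f^{d+1}` satisfies the layered geometric
equation mod `f^{d+1}`: assuming the unlayered identity `1 − S + Σ t_k S^k = 0`
for `S = Σ C[m] t^m`, every coefficient of `f`-degree `≤ d` of
`1 − S_L' + Σ_k v^{k−1} e^k f t_k (S_L')^k` vanishes, where `S_L' = S_L mod f^{d+1}`. -/
theorem stmt_18 (q d : ℕ)
    (hS : 1 - hyperCatalanSeries q + ∑ k : TIdx q,
        MvPowerSeries.X k * hyperCatalanSeries q ^ (k : ℕ) = 0) :
    ∀ n : LIdx q →₀ ℕ, n (Sum.inr 2) ≤ d →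
      MvPowerSeries.coeff n
        (1 - truncF q d (layeredSeries q) + ∑ k : TIdx q,
          (MvPowerSeries.X (Sum.inl k) : MvPowerSeries (LIdx q) ℚ) *
            MvPowerSeries.X (Sum.inr 0) ^ ((k : ℕ) - 1) *
            MvPowerSeries.X (Sum.inr 1) ^ (k : ℕ) *
            MvPowerSeries.X (Sum.inr 2) *
            truncF q d (layeredSeries q) ^ (k : ℕ)) = 0 :=
  stmt_18' q d hS
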